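/- Let b₁, …, b₆, c₁, …, c₆, s₁, …, s₆ be real numbers with b₁ = b₃ = b₄ = b₆ = 0 and s₁ = s₄ = 0 (the Hooke double-spherical situation). Then the equalities Q₁⁺ = Q₄⁺ and Q₁⁻ = Q₄⁻ of polynomials in ℂ[x] hold if and only if s₂² + s₃² + b₂² − (c₂b₂)² + 2s₂s₃c₂ = s₅² + s₆² + b₅² − (c₅b₅)² + 2s₅s₆c₅. -/

import Mathlib

open Polynomial

noncomputable section

/-- The quad polynomial `Qᵢ⁺`, with 0-based indexing: `Qp b c s i` is `Q_{i+1}⁺` of the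
parameters `b₁,…,b₆ = b 0,…,b 5`, etc. (indices mod 6). -/
def Qp (b c s : Fin 6 → ℝ) (i : Fin 6) : Polynomial ℂ :=
  (X + C (((b (i+2) * c (i+2) - b i * c i : ℝ) : ℂ) / 2 - ((s i : ℝ) : ℂ) / 2 * Complex.I))^2
  + C (Complex.I / 2 * ((b i * s (i+1) + b (i+2) * s (i+2) + s (i+1) * b (i+2) * c (i+1)
        + s (i+2) * b i * c (i+1) : ℝ) : ℂ)
      - ((b i * b (i+2) * c (i+1) - s (i+1) * s (i+2) * c (i+1) : ℝ) : ℂ) / 2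
      + (((s (i+1))^2 + (s (i+2))^2 - (b i)^2 + (b (i+1))^2 - (b (i+2))^2
        - (b (i+1))^2 * (c (i+1))^2 : ℝ) : ℂ) / 4)

/-- The quad polynomial `Qᵢ⁻`: obtained from `Qᵢ⁺` by negating all `b j`, all `c j`,
and `s₂, s₄, s₆` (the `s j` with odd 0-based index `j`), keeping `s₁, s₃, s₅`. -/
def Qm (b c s : Fin 6 → ℝ) (i : Fin 6) : Polynomial ℂ :=
  Qp (fun j => -b j) (fun j => -c j) (fun j => if j.val % 2 = 1 then -s j else s j) i

lemma Qp0_eq (b c s : Fin 6 → ℝ) (hb1 : b 0 = 0) (hb3 : b 2 = 0) (hs1 : s 0 = 0) :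
    Qp b c s 0 = X^2 + C ((((s 1)^2 + (s 2)^2 + (b 1)^2 - (c 1 * b 1)^2
      + 2 * s 1 * s 2 * c 1 : ℝ) : ℂ) / 4) := by
  simp only [Qp]
  norm_num [hb1, hb3, hs1]
  ring_nf
  rw [← C_neg, ← C_add]
  ring_nf

lemma Qp3_eq (b c s : Fin 6 → ℝ) (hb4 : b 3 = 0) (hb6 : b 5 = 0) (hs4 : s 3 = 0) :
    Qp b c s 3 = X^2 + C ((((s 4)^2 + (s 5)^2 + (b 4)^2 - (c 4 * b 4)^2
      + 2 * s 4 * s 5 * c 4 : ℝ) : ℂ) / 4) := by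
  simp only [Qp]
  norm_num [hb4, hb6, hs4, show (3:Fin 6)+2 = 5 from rfl, show (3:Fin 6)+1 = 4 from rfl]
  ring_nf
  rw [← C_neg, ← C_add]
  ring_nf

lemma Qm0_eq (b c s : Fin 6 → ℝ) (hb1 : b 0 = 0) (hb3 : b 2 = 0) (hs1 : s 0 = 0) :
    Qm b c s 0 = X^2 + C ((((s 1)^2 + (s 2)^2 + (b 1)^2 - (c 1 * b 1)^2
      + 2 * s 1 * s 2 * c 1 : ℝ) : ℂ) / 4) := by
  simp only [Qm, Qp]
  norm_num [hb1, hb3, hs1, show ((0:Fin 6):ℕ)=0 from rfl, show ((1:Fin 6):ℕ)=1 from rfl,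
    show ((2:Fin 6):ℕ)=2 from rfl]
  ring_nf
  rw [← C_neg, ← C_add]
  ring_nf

lemma Qm3_eq (b c s : Fin 6 → ℝ) (hb4 : b 3 = 0) (hb6 : b 5 = 0) (hs4 : s 3 = 0) :
    Qm b c s 3 = X^2 + C ((((s 4)^2 + (s 5)^2 + (b 4)^2 - (c 4 * b 4)^2
      + 2 * s 4 * s 5 * c 4 : ℝ) : ℂ) / 4) := by
  simp only [Qm, Qp]
  norm_num [hb4, hb6, hs4, show (3:Fin 6)+2 = 5 from rfl, show (3:Fin 6)+1 = 4 from rfl, show ((3:Fin 6):ℕ)=3 from rfl, show ((4:Fin 6):ℕ)=4 from rfl,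
    show ((5:Fin 6):ℕ)=5 from rfl]
  ring_nf
  rw [← C_neg, ← C_add]
  ring_nf

/-- In the Hooke double-spherical situation (`b₁ = b₃ = b₄ = b₆ = 0`, `s₁ = s₄ = 0`),
the equalities `Q₁⁺ = Q₄⁺` and `Q₁⁻ = Q₄⁻` hold iff
`s₂² + s₃² + b₂² − (c₂b₂)² + 2s₂s₃c₂ = s₅² + s₆² + b₅² − (c₅b₅)² + 2s₅s₆c₅`. -/
theorem hooke_quad_equalities_iff (b c s : Fin 6 → ℝ)
    (hb1 : b 0 = 0) (hb3 : b 2 = 0) (hb4 : b 3 = 0) (hb6 : b 5 = 0)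
    (hs1 : s 0 = 0) (hs4 : s 3 = 0) :
    (Qp b c s 0 = Qp b c s 3 ∧ Qm b c s 0 = Qm b c s 3) ↔
      (s 1)^2 + (s 2)^2 + (b 1)^2 - (c 1 * b 1)^2 + 2 * s 1 * s 2 * c 1 =
        (s 4)^2 + (s 5)^2 + (b 4)^2 - (c 4 * b 4)^2 + 2 * s 4 * s 5 * c 4 := by
  rw [Qp0_eq b c s hb1 hb3 hs1, Qp3_eq b c s hb4 hb6 hs4,
    Qm0_eq b c s hb1 hb3 hs1, Qm3_eq b c s hb4 hb6 hs4, and_self,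
    add_right_inj, C_inj, div_left_inj' (by norm_num)]
  exact_mod_cast Iff.rfl
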